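/- The system of six equations (R^3_1), (R^3_2), (R^1_2), (R^1_3), (R^2_3), (R^2_1) — where (R^3_1) reads s_□(q^{λ2^t+ρ})·T_{λ1,λ2,λ3} = ∑_{α1∈λ1−□} T_{α1,λ2,λ3} − ∑_{γ3∈λ3+□} q^{(κ(γ3)−κ(λ3))/2}·T_{λ1,λ2,γ3}, (R^3_2) reads s_□(q^{λ1+ρ})·T_{λ1,λ2,λ3} = ∑_{β2∈λ2−□} q^{(κ(β2)−κ(λ2))/2}·T_{λ1,β2,λ3} − ∑_{γ3∈λ3+□} T_{λ1,λ2,γ3}, and the remaining four are obtained from these two by applying the cyclic permutation of indices λ1→λ2→λ3→λ1 once and twice — has at most one solution (T_{λ1,λ2,λ3}) in ℚ(q^{1/2}) with T_{∅,∅,∅} = 1: any two families of elements of ℚ(q^{1/2}) indexed by triples of partitions that satisfy all six equations and take the value 1 at (∅,∅,∅) coincide. -/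

import Mathlib

open scoped BigOperators

noncomputable section

/-- The field `ℚ(q^{1/2})` of rational functions in `q^{1/2}`. -/
abbrev K : Type := RatFunc ℚ

/-- The formal variable `q^{1/2}`. -/
def t : K := RatFunc.X

/-- `q = (q^{1/2})^2`. -/
def qq : K := t ^ 2

/-- `κ(λ) = 2 ∑_{(i,j) ∈ λ} (j - i)`. -/
def kappa (lam : YoungDiagram) : ℤ :=
  2 * ∑ c ∈ lam.cells, ((c.2 : ℤ) - (c.1 : ℤ))

/-- `AddBox lam mu` says that `mu` is obtained from `lam` by adding a single box,
i.e. `mu ∈ lam + □`, equivalently `lam ∈ mu − □`. -/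
def AddBox (lam mu : YoungDiagram) : Prop :=
  lam.cells ⊆ mu.cells ∧ mu.card = lam.card + 1

/-- The specialization of the power sum `p_r` at the variables
`x_i = (q^{1/2})^{s(2 λ_i − 2 i + 1)}` (1-based `i ≥ 1`), i.e. at `q^{λ+ρ}` when `s = 1`
and at `q^{−ρ−λ}` when `s = −1`; in both cases a rational function in `q^{1/2}`. -/
def pSpec (s : ℤ) (lam : YoungDiagram) (r : ℕ) : K :=
  (∑ i ∈ Finset.range lam.card,
    (t ^ (s * (2 * (lam.rowLen i : ℤ) - 2 * (i : ℤ) - 1) * (r : ℤ)) -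
      t ^ (s * (-2 * (i : ℤ) - 1) * (r : ℤ))))
  + (s : K) / (t ^ (r : ℤ) - t ^ (-(r : ℤ)))

/-- `z_τ = ∏_k k^{m_k} m_k!` for a multiset `τ` of parts. -/
def zPart (m : Multiset ℕ) : ℕ :=
  m.prod * (m.dedup.map fun k => (m.count k).factorial).prod

/-- Specialization of the complete homogeneous symmetric function `h_n`, via the Newton
formula `h_n = ∑_{τ ⊢ n} p_τ / z_τ`. -/
def hSpec (s : ℤ) (lam : YoungDiagram) (n : ℕ) : K :=
  ∑ τ : Nat.Partition n, (τ.parts.map (pSpec s lam)).prod / (zPart τ.parts : K)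

/-- `h_n` specialization, extended by `0` to negative indices. -/
def hSpecZ (s : ℤ) (lam : YoungDiagram) (n : ℤ) : K :=
  if 0 ≤ n then hSpec s lam n.toNat else 0

/-- The specialization `s_{μ/ν}(q^{λ+ρ})` (for `s = 1`), resp. `s_{μ/ν}(q^{−ρ−λ})`
(for `s = −1`), of the skew Schur function, through the Jacobi–Trudi determinant;
it vanishes unless `ν ⊆ μ`. -/
def skewSchur (s : ℤ) (lam mu nu : YoungDiagram) : K :=
  Matrix.det fun i j : Fin (mu.card + nu.card) =>
    hSpecZ s lam ((mu.rowLen i : ℤ) - (nu.rowLen j : ℤ) - (i.1 : ℤ) + (j.1 : ℤ))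

/-- The one-box partition `□ = (1)` as a Young diagram. -/
def box : YoungDiagram := YoungDiagram.ofRowLens [1] (List.sortedGE_iff_pairwise.mpr (List.pairwise_singleton _ 1))

/-- `s_□(q^{λ+ρ})`. -/
def sBox (lam : YoungDiagram) : K := skewSchur 1 lam box ⊥

/-- The topological vertex
`C_{λ1,λ2,λ3}(q) = q^{κ(λ2)/2+κ(λ3)/2} s_{λ2^t}(q^ρ) ∑_η s_{λ3^t/η}(q^{λ2+ρ}) s_{λ1/η}(q^{λ2^t+ρ})`. -/
def vertexC (l1 l2 l3 : YoungDiagram) : K :=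
  t ^ (kappa l2 + kappa l3) * skewSchur 1 ⊥ l2.transpose ⊥ *
    ∑ᶠ eta : YoungDiagram,
      skewSchur 1 l2 l3.transpose eta * skewSchur 1 l2.transpose l1 eta

/-- `T_{λ1,λ2,λ3} = (−1)^{|λ1|+|λ2|+|λ3|} C_{λ1^t,λ2^t,λ3^t}`. -/
def vertexT (l1 l2 l3 : YoungDiagram) : K :=
  (-1 : K) ^ (l1.card + l2.card + l3.card) *
    vertexC l1.transpose l2.transpose l3.transpose

/-- Equation `(R^3_1)`:
`s_□(q^{λ2^t+ρ}) T_{λ1,λ2,λ3} = ∑_{α1∈λ1−□} T_{α1,λ2,λ3} − ∑_{γ3∈λ3+□} q^{(κ(γ3)−κ(λ3))/2} T_{λ1,λ2,γ3}`. -/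
def EqR31 (T : YoungDiagram → YoungDiagram → YoungDiagram → K) : Prop :=
  ∀ l1 l2 l3 : YoungDiagram,
    sBox l2.transpose * T l1 l2 l3 =
      (∑ᶠ (a : YoungDiagram) (_ : AddBox a l1), T a l2 l3) -
        ∑ᶠ (g : YoungDiagram) (_ : AddBox l3 g), t ^ (kappa g - kappa l3) * T l1 l2 g

/-- Equation `(R^3_2)`:
`s_□(q^{λ1+ρ}) T_{λ1,λ2,λ3} = ∑_{β2∈λ2−□} q^{(κ(β2)−κ(λ2))/2} T_{λ1,β2,λ3} − ∑_{γ3∈λ3+□} T_{λ1,λ2,γ3}`. -/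
def EqR32 (T : YoungDiagram → YoungDiagram → YoungDiagram → K) : Prop :=
  ∀ l1 l2 l3 : YoungDiagram,
    sBox l1 * T l1 l2 l3 =
      (∑ᶠ (b : YoungDiagram) (_ : AddBox b l2), t ^ (kappa b - kappa l2) * T l1 b l3) -
        ∑ᶠ (g : YoungDiagram) (_ : AddBox l3 g), T l1 l2 g

/-- The system of the six equations `(R^3_1)`, `(R^3_2)` together with their images under
the cyclic permutation of indices `λ1 → λ2 → λ3 → λ1` applied once and twice
(i.e. `(R^1_2)`, `(R^1_3)`, `(R^2_3)`, `(R^2_1)`). -/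
def SatisfiesSystem (T : YoungDiagram → YoungDiagram → YoungDiagram → K) : Prop :=
  EqR31 T ∧ EqR32 T ∧
    EqR31 (fun a b c => T c a b) ∧ EqR32 (fun a b c => T c a b) ∧
      EqR31 (fun a b c => T b c a) ∧ EqR32 (fun a b c => T b c a)

namespace VRU

def content (c : ℕ × ℕ) : ℤ := (c.2 : ℤ) - (c.1 : ℤ)

def IsCorner (γ : YoungDiagram) (r : ℕ × ℕ) : Prop :=
  r ∈ γ ∧ (r.1 + 1, r.2) ∉ γ ∧ (r.1, r.2 + 1) ∉ γ

lemma t_ne_zero : t ≠ 0 := RatFunc.X_ne_zero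

lemma t_pow_ne_one {k : ℕ} (hk : 0 < k) : t ^ k ≠ 1 := by
  intro h
  have : (Polynomial.X : Polynomial ℚ) ^ k = 1 := by
    apply RatFunc.algebraMap_injective (K := ℚ)
    rw [map_pow, map_one]
    exact h
  have := congrArg Polynomial.natDegree this
  simp [Polynomial.natDegree_X_pow] at this
  omega

lemma t_zpow_inj {a b : ℤ} (h : t ^ a = t ^ b) : a = b := by
  have hz : ∀ d : ℤ, t ^ d = 1 → d = 0 := by
    intro d hd
    rcases lt_trichotomy d 0 with hlt | he | hgt
    · exfalso
      have : t ^ (-d) = 1 := by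
        rw [zpow_neg, hd, inv_one]
      have hn : (0:ℤ) < -d := by omega
      have : t ^ (-d).toNat = 1 := by
        rw [← this, ← zpow_natCast, Int.toNat_of_nonneg (by omega)]
      exact t_pow_ne_one (by omega) this
    · exact he
    · exfalso
      have : t ^ d.toNat = 1 := by
        rw [← hd, ← zpow_natCast, Int.toNat_of_nonneg (by omega)]
      exact t_pow_ne_one (by omega) this
  have : t ^ (a - b) = 1 := by
    rw [zpow_sub₀ t_ne_zero, h, div_self (zpow_ne_zero _ t_ne_zero)]
  have := hz _ this
  omega

lemma cell_lt_card {γ : YoungDiagram} {c : ℕ × ℕ} (h : c ∈ γ) :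
    c.1 < γ.card ∧ c.2 < γ.card := by
  constructor
  · have hsub : (Finset.range (c.1 + 1)).image (fun k => (k, c.2)) ⊆ γ.cells := by
      intro x hx
      simp only [Finset.mem_image, Finset.mem_range] at hx
      obtain ⟨k, hk, rfl⟩ := hx
      refine γ.up_left_mem ?_ le_rfl (by simpa using h)
      omega
    have := Finset.card_le_card hsub
    rwa [Finset.card_image_of_injective _ (fun a b hab => by simpa using hab),
      Finset.card_range] at this
  · have hsub : (Finset.range (c.2 + 1)).image (fun k => (c.1, k)) ⊆ γ.cells := by
      intro x hx
      simp only [Finset.mem_image, Finset.mem_range] at hx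
      obtain ⟨k, hk, rfl⟩ := hx
      refine γ.up_left_mem le_rfl ?_ (by simpa using h)
      omega
    have := Finset.card_le_card hsub
    rwa [Finset.card_image_of_injective _ (fun a b hab => by simpa using hab),
      Finset.card_range] at this

lemma kappa_le (δ : YoungDiagram) : kappa δ ≤ 2 * (δ.card : ℤ) * δ.card := by
  have h1 : ∑ c ∈ δ.cells, ((c.2 : ℤ) - (c.1 : ℤ)) ≤ ∑ _c ∈ δ.cells, (δ.card : ℤ) := by
    apply Finset.sum_le_sum
    intro c hc
    have := (cell_lt_card (γ := δ) (by simpa using hc)).2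
    omega
  rw [Finset.sum_const, nsmul_eq_mul] at h1
  have hcc : ((δ.cells.card : ℤ)) = (δ.card : ℤ) := rfl
  rw [hcc] at h1
  unfold kappa
  linarith


lemma addBox_exists {μ γ : YoungDiagram} (h : AddBox μ γ) :
    ∃ b, b ∉ μ.cells ∧ γ.cells = insert b μ.cells := by
  have hcard : (γ.cells \ μ.cells).card = 1 := by
    rw [Finset.card_sdiff_of_subset h.1]
    have := h.2
    simp only [YoungDiagram.card] at this ⊢
    omega
  obtain ⟨b, hb⟩ := Finset.card_eq_one.mp hcard
  refine ⟨b, ?_, ?_⟩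
  · have : b ∈ γ.cells \ μ.cells := hb ▸ Finset.mem_singleton_self b
    exact (Finset.mem_sdiff.mp this).2
  · have h1 : γ.cells = μ.cells ∪ (γ.cells \ μ.cells) := by
      rw [Finset.union_sdiff_of_subset h.1]
    rw [h1, hb, Finset.union_comm]
    exact (Finset.insert_eq b μ.cells).symm

lemma addBox_card {μ γ : YoungDiagram} (h : AddBox μ γ) : γ.card = μ.card + 1 := h.2

lemma newcell_corner {μ γ : YoungDiagram} {b : ℕ × ℕ} (hb : b ∉ μ.cells)
    (hγ : γ.cells = insert b μ.cells) : IsCorner γ b := by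
  have hbγ : b ∈ γ := by rw [← YoungDiagram.mem_cells, hγ]; exact Finset.mem_insert_self _ _
  refine ⟨hbγ, ?_, ?_⟩
  · intro hmem
    rw [← YoungDiagram.mem_cells, hγ, Finset.mem_insert] at hmem
    rcases hmem with he | hμ
    · exact absurd (congrArg Prod.fst he) (by simp)
    · exact hb (μ.up_left_mem (Nat.le_succ _) le_rfl (by simpa using hμ))
  · intro hmem
    rw [← YoungDiagram.mem_cells, hγ, Finset.mem_insert] at hmem
    rcases hmem with he | hμ
    · exact absurd (congrArg Prod.snd he) (by simp)
    · exact hb (μ.up_left_mem le_rfl (Nat.le_succ _) (by simpa using hμ))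

lemma corner_content_inj {γ : YoungDiagram} {r r' : ℕ × ℕ} (h : IsCorner γ r)
    (h' : IsCorner γ r') (hc : content r = content r') : r = r' := by
  unfold content at hc
  rcases lt_trichotomy r.1 r'.1 with hlt | he | hgt
  · exfalso
    have hj : r.2 < r'.2 := by omega
    exact h.2.1 (γ.up_left_mem (by omega) (by omega) h'.1)
  · have : r.2 = r'.2 := by omega
    exact Prod.ext he this
  · exfalso
    have hj : r'.2 < r.2 := by omega
    exact h'.2.1 (γ.up_left_mem (by omega) (by omega) h.1)

lemma newcell_prev_mem {μ γ : YoungDiagram} {b : ℕ × ℕ} (hb : b ∉ μ.cells)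
    (hγ : γ.cells = insert b μ.cells) :
    (0 < b.2 → (b.1, b.2 - 1) ∈ μ.cells) ∧ (0 < b.1 → (b.1 - 1, b.2) ∈ μ.cells) := by
  have hbγ : b ∈ γ := by rw [← YoungDiagram.mem_cells, hγ]; exact Finset.mem_insert_self _ _
  have hbb : (b.1, b.2) ∈ γ := by simpa using hbγ
  constructor
  · intro h2
    have : (b.1, b.2 - 1) ∈ γ := γ.up_left_mem le_rfl (by omega) hbb
    rw [← YoungDiagram.mem_cells, hγ, Finset.mem_insert] at this
    rcases this with he | hμ
    · exact absurd (congrArg Prod.snd he) (by simp; omega)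
    · exact hμ
  · intro h2
    have : (b.1 - 1, b.2) ∈ γ := γ.up_left_mem (by omega) le_rfl hbb
    rw [← YoungDiagram.mem_cells, hγ, Finset.mem_insert] at this
    rcases this with he | hμ
    · exact absurd (congrArg Prod.fst he) (by simp; omega)
    · exact hμ

lemma addcell_content_inj {μ γ γ' : YoungDiagram} {b b' : ℕ × ℕ}
    (hb : b ∉ μ.cells) (hγ : γ.cells = insert b μ.cells)
    (hb' : b' ∉ μ.cells) (hγ' : γ'.cells = insert b' μ.cells)
    (hc : content b = content b') : b = b' := by
  unfold content at hc
  by_contra hne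
  -- wlog b.1 < b'.1
  have key : ∀ (c c' : ℕ × ℕ), c ∉ μ.cells → c' ∉ μ.cells →
      (∀ δ : YoungDiagram, δ.cells = insert c' μ.cells → True) → -- dummy
      (0 < c'.2 → (c'.1, c'.2 - 1) ∈ μ.cells) →
      (c.2 : ℤ) - c.1 = (c'.2 : ℤ) - c'.1 → c.1 < c'.1 → False := by
    intro c c' hcm hcm' _ hprev hcc hlt
    have h2 : c.2 < c'.2 := by omega
    have hmem : (c'.1, c'.2 - 1) ∈ μ := by simpa using hprev (by omega : 0 < c'.2)
    have : (c.1, c.2) ∈ μ := μ.up_left_mem (by omega) (by omega) hmem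
    exact hcm (by simpa using this)
  rcases lt_trichotomy b.1 b'.1 with hlt | he | hgt
  · exact key b b' hb hb' (fun _ _ => trivial) (newcell_prev_mem hb' hγ').1 hc hlt
  · exact hne (Prod.ext he (by omega))
  · exact key b' b hb' hb (fun _ _ => trivial) (newcell_prev_mem hb hγ).1 (by omega) hgt

lemma corner_insert {μ γ : YoungDiagram} {r b : ℕ × ℕ} (h : IsCorner μ r)
    (hb : b ∉ μ.cells) (hγ : γ.cells = insert b μ.cells)
    (h1 : b ≠ (r.1 + 1, r.2)) (h2 : b ≠ (r.1, r.2 + 1)) : IsCorner γ r := by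
  have hsub : μ.cells ⊆ γ.cells := by rw [hγ]; exact Finset.subset_insert _ _
  refine ⟨by rw [← YoungDiagram.mem_cells]; exact hsub h.1, ?_, ?_⟩
  · intro hmem
    rw [← YoungDiagram.mem_cells, hγ, Finset.mem_insert] at hmem
    rcases hmem with he | hμ
    · exact h1 he.symm
    · exact h.2.1 hμ
  · intro hmem
    rw [← YoungDiagram.mem_cells, hγ, Finset.mem_insert] at hmem
    rcases hmem with he | hμ
    · exact h2 he.symm
    · exact h.2.2 hμ

lemma interlace {μ γ1 γ2 : YoungDiagram} {b1 b2 : ℕ × ℕ}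
    (hb1 : b1 ∉ μ.cells) (h1 : γ1.cells = insert b1 μ.cells)
    (hb2 : b2 ∉ μ.cells) (h2 : γ2.cells = insert b2 μ.cells)
    (hlt : content b1 < content b2) :
    ∃ r, IsCorner μ r ∧ content b1 < content r ∧ content r < content b2 := by
  unfold content at hlt ⊢
  -- first: b2.1 < b1.1
  have hrow : b2.1 < b1.1 := by
    by_contra hge
    push_neg at hge
    have h22 : b1.2 < b2.2 := by omega
    have hmem : (b2.1, b2.2 - 1) ∈ μ := by simpa using (newcell_prev_mem hb2 h2).1 (by omega : 0 < b2.2)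
    have : (b1.1, b1.2) ∈ μ := μ.up_left_mem (by omega) (by omega) hmem
    exact hb1 (by simpa using this)
  have hi1 : 0 < b1.1 := by omega
  -- row b1.1 - 1 of μ is nonempty
  have hrow_ne : (b1.1 - 1, b1.2) ∈ μ.cells := (newcell_prev_mem hb1 h1).2 hi1
  -- take max column in that row
  set S := μ.cells.filter (fun c => c.1 = b1.1 - 1) with hS
  have hSne : S.Nonempty := ⟨(b1.1 - 1, b1.2), by simp [hS, hrow_ne]⟩
  obtain ⟨r, hrS, hrmax⟩ := Finset.exists_max_image S (fun c => c.2) hSne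
  have hrmem : r ∈ μ.cells := (Finset.mem_filter.mp hrS).1
  have hrrow : r.1 = b1.1 - 1 := (Finset.mem_filter.mp hrS).2
  have hb1r : b1.2 ≤ r.2 := hrmax (b1.1 - 1, b1.2) (by simp [hS, hrow_ne])
  have hcorner : IsCorner μ r := by
    refine ⟨by simpa using hrmem, ?_, ?_⟩
    · intro hmem
      -- (r.1+1, r.2) = (b1.1, r.2) ∈ μ would give b1 ∈ μ
      apply hb1
      have : (b1.1, r.2) ∈ μ := by
        have : r.1 + 1 = b1.1 := by omega
        rwa [this] at hmem
      exact μ.up_left_mem le_rfl hb1r this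
    · intro hmem
      have : (r.1, r.2 + 1) ∈ S := by
        simp only [hS, Finset.mem_filter]
        exact ⟨by simpa using hmem, hrrow⟩
      have := hrmax _ this
      simp at this
  refine ⟨r, hcorner, ?_, ?_⟩
  · omega
  · -- r.2 < b2.2
    have hjb : r.2 < b2.2 := by
      by_contra hge
      push_neg at hge
      apply hb2
      have hrm : (r.1, r.2) ∈ μ := by simpa using hrmem
      have : (b2.1, b2.2) ∈ μ := μ.up_left_mem (by omega) (by omega) hrm
      simpa using this
    omega


lemma kappa_insert {μ γ : YoungDiagram} {b : ℕ × ℕ} (hb : b ∉ μ.cells)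
    (hγ : γ.cells = insert b μ.cells) : kappa γ = kappa μ + 2 * content b := by
  unfold kappa content
  rw [hγ, Finset.sum_insert hb]
  ring

def corners (γ : YoungDiagram) : Finset (ℕ × ℕ) :=
  γ.cells.filter (fun c => (c.1 + 1, c.2) ∉ γ ∧ (c.1, c.2 + 1) ∉ γ)

lemma mem_corners {γ : YoungDiagram} {r : ℕ × ℕ} : r ∈ corners γ ↔ IsCorner γ r := by
  unfold corners IsCorner
  simp [Finset.mem_filter, and_assoc]

lemma corners_nonempty {γ : YoungDiagram} (h : γ.cells.Nonempty) : (corners γ).Nonempty := by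
  obtain ⟨b, hbS, hbmax⟩ := Finset.exists_max_image γ.cells (fun c => c.1 + c.2) h
  refine ⟨b, mem_corners.mpr ⟨by simpa using hbS, ?_, ?_⟩⟩
  · intro hmem
    have := hbmax _ (by simpa using hmem)
    simp at this
  · intro hmem
    have := hbmax _ (by simpa using hmem)
    simp at this

noncomputable def minCorner (γ : YoungDiagram) : ℕ × ℕ :=
  if h : (corners γ).Nonempty then
    (Finset.exists_min_image (corners γ) content h).choose
  else (0, 0)

lemma minCorner_spec {γ : YoungDiagram} (h : γ.cells.Nonempty) :
    IsCorner γ (minCorner γ) ∧ ∀ r', IsCorner γ r' → content (minCorner γ) ≤ content r' := by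
  have hne := corners_nonempty h
  rw [minCorner, dif_pos hne]
  obtain ⟨hm, hmin⟩ := (Finset.exists_min_image (corners γ) content hne).choose_spec
  exact ⟨mem_corners.mp hm, fun r' hr' => hmin r' (mem_corners.mpr hr')⟩

noncomputable def down (γ : YoungDiagram) : YoungDiagram :=
  if h : γ.cells.Nonempty then
    { cells := γ.cells.erase (minCorner γ)
      isLowerSet := by
        intro a b hab ha
        have hc := (minCorner_spec h).1
        simp only [Finset.coe_erase, Set.mem_diff, Finset.mem_coe, Set.mem_singleton_iff] at ha ⊢
        obtain ⟨ha1, ha2⟩ := ha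
        have hb1 : b ∈ γ := γ.isLowerSet hab (by simpa using ha1)
        refine ⟨by simpa using hb1, ?_⟩
        intro hbe
        have hcb : IsCorner γ b := by rw [hbe]; exact hc
        have h1 : b.1 ≤ a.1 := hab.1
        have h2 : b.2 ≤ a.2 := hab.2
        have hne : b ≠ a := fun he => ha2 (he.symm.trans hbe)
        have : b.1 < a.1 ∨ b.2 < a.2 := by
          by_contra hcon
          push_neg at hcon
          exact hne (Prod.ext (by omega) (by omega))
        rcases this with hlt | hlt
        · exact hcb.2.1 (γ.up_left_mem (by omega) h2 (show (a.1, a.2) ∈ γ from by simpa using ha1))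
        · exact hcb.2.2 (γ.up_left_mem h1 (by omega) (show (a.1, a.2) ∈ γ from by simpa using ha1)) }
  else ⊥

lemma down_cells {γ : YoungDiagram} (h : γ.cells.Nonempty) :
    (down γ).cells = γ.cells.erase (minCorner γ) := by
  rw [down, dif_pos h]

lemma down_notmem {γ : YoungDiagram} (h : γ.cells.Nonempty) :
    minCorner γ ∉ (down γ).cells := by
  rw [down_cells h]; exact Finset.notMem_erase _ _

lemma down_insert {γ : YoungDiagram} (h : γ.cells.Nonempty) :
    γ.cells = insert (minCorner γ) (down γ).cells := by
  rw [down_cells h]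
  exact (Finset.insert_erase ((minCorner_spec h).1.1)).symm

lemma down_card {γ : YoungDiagram} (h : γ.cells.Nonempty) :
    (down γ).card + 1 = γ.card := by
  show ((down γ).cells.card) + 1 = γ.cells.card
  rw [down_cells h]
  exact Finset.card_erase_add_one ((minCorner_spec h).1.1)

lemma down_addBox {γ : YoungDiagram} (h : γ.cells.Nonempty) : AddBox (down γ) γ := by
  refine ⟨?_, ?_⟩
  · rw [down_cells h]; exact Finset.erase_subset _ _
  · have := down_card h
    omega

lemma kappa_down {γ : YoungDiagram} (h : γ.cells.Nonempty) :
    kappa γ = kappa (down γ) + 2 * content (minCorner γ) :=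
  kappa_insert (down_notmem h) (down_insert h)


lemma finite_addBox (μ : YoungDiagram) : {g : YoungDiagram | AddBox μ g}.Finite := by
  classical
  set s : Finset (ℕ × ℕ) := (Finset.range (μ.card + 1)) ×ˢ (Finset.range (μ.card + 1)) with hs
  have hsub : {g : YoungDiagram | AddBox μ g} ⊆ (fun g : YoungDiagram => g.cells) ⁻¹' ↑(s.powerset) := by
    intro g hg
    have hg' : AddBox μ g := hg
    show g.cells ∈ (↑(s.powerset) : Set (Finset (ℕ × ℕ)))
    rw [Finset.mem_coe, Finset.mem_powerset]
    intro c hc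
    have := cell_lt_card (γ := g) (by simpa using hc)
    have hcard := hg'.2
    simp only [hs, Finset.mem_product, Finset.mem_range]
    omega
  apply Set.Finite.subset _ hsub
  apply Set.Finite.preimage
  · intro x _ y _ hxy
    exact YoungDiagram.ext hxy
  · exact (s.powerset : Finset (Finset (ℕ × ℕ))).finite_toSet

noncomputable def addFinset (μ : YoungDiagram) : Finset YoungDiagram :=
  (finite_addBox μ).toFinset

lemma mem_addFinset {μ g : YoungDiagram} : g ∈ addFinset μ ↔ AddBox μ g := by
  unfold addFinset
  rw [Set.Finite.mem_toFinset]
  rfl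

lemma finsum_addBox (μ : YoungDiagram) (F : YoungDiagram → K) :
    (∑ᶠ (g : YoungDiagram) (_ : AddBox μ g), F g) = ∑ g ∈ addFinset μ, F g :=
  finsum_mem_eq_finite_toFinset_sum F (finite_addBox μ)

lemma cond_congr {P : YoungDiagram → Prop} {F F' : YoungDiagram → K}
    (h : ∀ a, P a → F a = F' a) :
    (∑ᶠ (a : YoungDiagram) (_ : P a), F a) = ∑ᶠ (a : YoungDiagram) (_ : P a), F' a := by
  apply finsum_congr
  intro a
  by_cases hp : P a
  · rw [h a hp]
  · haveI : IsEmpty (P a) := ⟨hp⟩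
    rw [finsum_of_isEmpty, finsum_of_isEmpty]

lemma no_three {μ g1 g2 g3 : YoungDiagram} {b1 b2 b3 : ℕ × ℕ}
    (hb1 : b1 ∉ μ.cells) (h1 : g1.cells = insert b1 μ.cells)
    (hb2 : b2 ∉ μ.cells) (h2 : g2.cells = insert b2 μ.cells)
    (hb3 : b3 ∉ μ.cells) (h3 : g3.cells = insert b3 μ.cells)
    (hc12 : content b1 < content b2) (hc23 : content b2 < content b3)
    (hmin : ∀ r', IsCorner g3 r' → content b3 ≤ content r') : False := by
  obtain ⟨r, hrc, hr1, hr2⟩ := interlace hb1 h1 hb2 h2 hc12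
  have hne1 : b3 ≠ (r.1 + 1, r.2) := by
    intro he
    have : content b3 = content r - 1 := by rw [he]; unfold content; push_cast; ring
    omega
  have hne2 : b3 ≠ (r.1, r.2 + 1) := by
    intro he
    have : content b3 = content r + 1 := by rw [he]; unfold content; push_cast; ring
    omega
  have hr3 : IsCorner g3 r := corner_insert hrc hb3 h3 hne1 hne2
  have := hmin r hr3
  omega


lemma keyV (f : YoungDiagram → K) (m : ℕ) (hm : 0 < m)
    (h0 : ∀ μ : YoungDiagram, μ.card + 1 = m → ∑ g ∈ addFinset μ, f g = 0)
    (h1 : ∀ μ : YoungDiagram, μ.card + 1 = m → ∑ g ∈ addFinset μ, t ^ (kappa g - kappa μ) * f g = 0) :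
    ∀ γ : YoungDiagram, γ.card = m → f γ = 0 := by
  classical
  have key : ∀ n : ℕ, ∀ γ : YoungDiagram, γ.card = m →
      (2 * (m : ℤ) * m + 1 - kappa (down γ)).toNat ≤ n → f γ = 0 := by
    intro n
    induction n using Nat.strong_induction_on with
    | _ n ih =>
      intro γ hγcard hmeas
      have hne : γ.cells.Nonempty := by
        rw [← Finset.card_pos]
        show 0 < γ.card
        omega
      obtain ⟨hcornγ, hminγ⟩ := minCorner_spec hne
      set μ := down γ with hμdef
      have hABγ : AddBox μ γ := down_addBox hne
      have hμcard : μ.card + 1 = m := by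
        have := down_card hne
        rw [← hμdef] at this
        omega
      -- f vanishes on the non-distinguished extensions of μ
      have hbad : ∀ g : YoungDiagram, AddBox μ g → down g ≠ μ → f g = 0 := by
        intro g hAB hgbad
        obtain ⟨b, hbμ, hgcells⟩ := addBox_exists hAB
        have hgcard : g.card = m := by
          have := hAB.2
          omega
        have hgne : g.cells.Nonempty := by
          rw [← Finset.card_pos]
          show 0 < g.card
          omega
        obtain ⟨hcorng, hming⟩ := minCorner_spec hgne
        have hbc : IsCorner g b := newcell_corner hbμ hgcells
        have hmcne : minCorner g ≠ b := by
          intro he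
          apply hgbad
          apply YoungDiagram.ext
          rw [down_cells hgne, he, hgcells, Finset.erase_insert hbμ]
        have hle : content (minCorner g) < content b := by
          have h1 := hming b hbc
          rcases h1.lt_or_eq with h | h
          · exact h
          · exact absurd (corner_content_inj hcorng hbc h) hmcne
        -- kappa comparison
        have hk1 : kappa g = kappa μ + 2 * content b := kappa_insert hbμ hgcells
        have hk2 : kappa g = kappa (down g) + 2 * content (minCorner g) := kappa_down hgne
        have hkgt : kappa μ < kappa (down g) := by omega
        -- bound
        have hbound : kappa (down g) ≤ 2 * ((m : ℤ) - 1) * ((m : ℤ) - 1) := by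
          have hb1 := kappa_le (down g)
          have hb2 : ((down g).card : ℤ) = (m : ℤ) - 1 := by
            have := down_card hgne
            push_cast
            omega
          rw [hb2] at hb1
          linarith
        have hmlt : (2 * (m : ℤ) * m + 1 - kappa (down g)).toNat <
            (2 * (m : ℤ) * m + 1 - kappa μ).toNat := by
          have hmz : (1 : ℤ) ≤ (m : ℤ) := by exact_mod_cast hm
          have : 2 * ((m : ℤ) - 1) * ((m : ℤ) - 1) ≤ 2 * (m:ℤ) * m := by nlinarith
          omega
        exact ih _ (by omega) g hgcard le_rfl
      -- split the sums
      set A := addFinset μ with hA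
      set G := A.filter (fun g => down g = μ) with hG
      have hsum0 : ∑ g ∈ G, f g = 0 := by
        have hs := h0 μ hμcard
        rw [← Finset.sum_filter_add_sum_filter_not A (fun g => down g = μ)] at hs
        have hz : ∑ g ∈ A.filter (fun g => ¬ down g = μ), f g = 0 := by
          apply Finset.sum_eq_zero
          intro g hg
          rw [Finset.mem_filter] at hg
          exact hbad g (mem_addFinset.mp hg.1) hg.2
        rw [hz, add_zero] at hs
        exact hs
      have hsum1 : ∑ g ∈ G, t ^ (kappa g - kappa μ) * f g = 0 := by
        have hs := h1 μ hμcard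
        rw [← Finset.sum_filter_add_sum_filter_not A (fun g => down g = μ)] at hs
        have hz : ∑ g ∈ A.filter (fun g => ¬ down g = μ), t ^ (kappa g - kappa μ) * f g = 0 := by
          apply Finset.sum_eq_zero
          intro g hg
          rw [Finset.mem_filter] at hg
          rw [hbad g (mem_addFinset.mp hg.1) hg.2, mul_zero]
        rw [hz, add_zero] at hs
        exact hs
      have hγG : γ ∈ G := by
        rw [hG, Finset.mem_filter]
        exact ⟨mem_addFinset.mpr hABγ, rfl⟩
      -- good elements have min-corner = new cell
      have hgood : ∀ g ∈ G, ∃ b, b ∉ μ.cells ∧ g.cells = insert b μ.cells ∧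
          (∀ r', IsCorner g r' → content b ≤ content r') := by
        intro g hg
        rw [hG, Finset.mem_filter] at hg
        obtain ⟨hgA, hgd⟩ := hg
        have hAB := mem_addFinset.mp hgA
        obtain ⟨b, hbμ, hgcells⟩ := addBox_exists hAB
        have hgne : g.cells.Nonempty := by
          rw [← Finset.card_pos]
          have := hAB.2
          show 0 < g.card
          omega
        obtain ⟨hcorng, hming⟩ := minCorner_spec hgne
        have hmc : minCorner g = b := by
          by_contra hne'
          have : b ∈ (down g).cells := by
            rw [down_cells hgne, Finset.mem_erase]
            refine ⟨fun he => hne' he.symm, ?_⟩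
            rw [hgcells]
            exact Finset.mem_insert_self _ _
          rw [hgd] at this
          exact hbμ this
        refine ⟨b, hbμ, hgcells, ?_⟩
        rw [← hmc]
        exact hming
      -- at most two good elements
      by_cases hone : ∀ g ∈ G, g = γ
      · have hGs : G = {γ} := by
          apply Finset.eq_singleton_iff_unique_mem.mpr
          exact ⟨hγG, hone⟩
        rw [hGs, Finset.sum_singleton] at hsum0
        exact hsum0
      · push_neg at hone
        obtain ⟨g', hg'G, hg'ne⟩ := hone
        have hpair : ∀ g ∈ G, g = γ ∨ g = g' := by
          intro g hgG
          by_contra hcon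
          push_neg at hcon
          obtain ⟨hgγ, hgg'⟩ := hcon
          -- three distinct good elements: contradiction
          obtain ⟨c1, hc1μ, hc1c, hc1m⟩ := hgood γ hγG
          obtain ⟨c2, hc2μ, hc2c, hc2m⟩ := hgood g' hg'G
          obtain ⟨c3, hc3μ, hc3c, hc3m⟩ := hgood g hgG
          have hd12 : content c1 ≠ content c2 := by
            intro he
            exact hg'ne (YoungDiagram.ext (by rw [hc2c, hc1c,
              addcell_content_inj hc2μ hc2c hc1μ hc1c he.symm]))
          have hd13 : content c1 ≠ content c3 := by
            intro he
            exact hgγ (YoungDiagram.ext (by rw [hc3c, hc1c,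
              addcell_content_inj hc3μ hc3c hc1μ hc1c he.symm]))
          have hd23 : content c2 ≠ content c3 := by
            intro he
            exact hgg' (YoungDiagram.ext (by rw [hc3c, hc2c,
              addcell_content_inj hc3μ hc3c hc2μ hc2c he.symm]))
          -- sort the three contents and apply no_three
          rcases lt_trichotomy (content c1) (content c2) with h12 | h12 | h12
          · rcases lt_trichotomy (content c2) (content c3) with h23 | h23 | h23
            · exact no_three hc1μ hc1c hc2μ hc2c hc3μ hc3c h12 h23 hc3m
            · exact hd23 h23
            · rcases lt_trichotomy (content c1) (content c3) with h13 | h13 | h13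
              · exact no_three hc1μ hc1c hc3μ hc3c hc2μ hc2c h13 h23 hc2m
              · exact hd13 h13
              · exact no_three hc3μ hc3c hc1μ hc1c hc2μ hc2c h13 h12 hc2m
          · exact hd12 h12
          · rcases lt_trichotomy (content c1) (content c3) with h13 | h13 | h13
            · exact no_three hc2μ hc2c hc1μ hc1c hc3μ hc3c h12 h13 hc3m
            · exact hd13 h13
            · rcases lt_trichotomy (content c2) (content c3) with h23 | h23 | h23
              · exact no_three hc2μ hc2c hc3μ hc3c hc1μ hc1c h23 h13 hc1m
              · exact hd23 h23
              · exact no_three hc3μ hc3c hc2μ hc2c hc1μ hc1c h23 h12 hc1m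
        have hGpair : G = {γ, g'} := by
          apply Finset.Subset.antisymm
          · intro g hg
            rcases hpair g hg with h | h
            · simp [h]
            · simp [h]
          · intro g hg
            rcases Finset.mem_insert.mp hg with h | h
            · rw [h]; exact hγG
            · rw [Finset.mem_singleton.mp h]; exact hg'G
        have hγg' : γ ≠ g' := fun he => hg'ne he.symm
        rw [hGpair, Finset.sum_pair hγg'] at hsum0 hsum1
        -- distinct kappas
        obtain ⟨c1, hc1μ, hc1c, _⟩ := hgood γ hγG
        obtain ⟨c2, hc2μ, hc2c, _⟩ := hgood g' hg'G
        have hκne : kappa γ ≠ kappa g' := by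
          intro he
          have hk1 : kappa γ = kappa μ + 2 * content c1 := kappa_insert hc1μ hc1c
          have hk2 : kappa g' = kappa μ + 2 * content c2 := kappa_insert hc2μ hc2c
          have hcc : content c1 = content c2 := by omega
          exact hγg' (YoungDiagram.ext (by rw [hc1c, hc2c,
            addcell_content_inj hc1μ hc1c hc2μ hc2c hcc]))
        have htne : t ^ (kappa γ - kappa μ) ≠ t ^ (kappa g' - kappa μ) := by
          intro he
          have := t_zpow_inj he
          omega
        have hlin : (t ^ (kappa γ - kappa μ) - t ^ (kappa g' - kappa μ)) * f γ = 0 := by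
          linear_combination hsum1 - t ^ (kappa g' - kappa μ) * hsum0
        rcases mul_eq_zero.mp hlin with h | h
        · exact absurd (sub_eq_zero.mp h) htne
        · exact h
  intro γ hγ
  exact key _ γ hγ le_rfl


lemma card_zero_bot {γ : YoungDiagram} (h : γ.card = 0) : γ = ⊥ := by
  apply YoungDiagram.ext
  rw [YoungDiagram.cells_bot]
  exact Finset.card_eq_zero.mp h

end VRU

/-- The system of the six equations `(R^j_i)` has at most one solution with
`T_{∅,∅,∅} = 1`: any two solutions coincide. -/
theorem vertex_recursion_uniqueness
    (T T' : YoungDiagram → YoungDiagram → YoungDiagram → K)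
    (hT : SatisfiesSystem T) (hT' : SatisfiesSystem T')
    (h1 : T ⊥ ⊥ ⊥ = 1) (h1' : T' ⊥ ⊥ ⊥ = 1) : T = T' := by
  classical
  obtain ⟨e31, e32, e31c, e32c, e31cc, e32cc⟩ := hT
  obtain ⟨f31, f32, f31c, f32c, f31cc, f32cc⟩ := hT'
  have main : ∀ n : ℕ, ∀ l1 l2 l3 : YoungDiagram,
      l1.card + l2.card + l3.card ≤ n → T l1 l2 l3 = T' l1 l2 l3 := by
    intro n
    induction n with
    | zero =>
      intro l1 l2 l3 h
      have hb1 : l1 = ⊥ := VRU.card_zero_bot (by omega)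
      have hb2 : l2 = ⊥ := VRU.card_zero_bot (by omega)
      have hb3 : l3 = ⊥ := VRU.card_zero_bot (by omega)
      rw [hb1, hb2, hb3, h1, h1']
    | succ n ih =>
      intro l1 l2 l3 htot
      by_cases hle : l1.card + l2.card + l3.card ≤ n
      · exact ih l1 l2 l3 hle
      have heq : l1.card + l2.card + l3.card = n + 1 := by omega
      by_cases h3 : 0 < l3.card
      · -- grow in slot 3
        have hcond0 : ∀ μ : YoungDiagram, μ.card + 1 = l3.card →
            ∑ g ∈ VRU.addFinset μ, (T l1 l2 g - T' l1 l2 g) = 0 := by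
          intro μ hμ
          have e := e32 l1 l2 μ
          have e' := f32 l1 l2 μ
          have hX : T l1 l2 μ = T' l1 l2 μ := ih l1 l2 μ (by omega)
          have hR : (∑ᶠ (b : YoungDiagram) (_ : AddBox b l2), t ^ (kappa b - kappa l2) * T l1 b μ)
              = ∑ᶠ (b : YoungDiagram) (_ : AddBox b l2), t ^ (kappa b - kappa l2) * T' l1 b μ :=
            VRU.cond_congr fun b hb => by
              rw [ih l1 b μ (by have := hb.2; omega)]
          have hS : (∑ᶠ (g : YoungDiagram) (_ : AddBox μ g), T l1 l2 g)
              = ∑ᶠ (g : YoungDiagram) (_ : AddBox μ g), T' l1 l2 g := by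
            linear_combination e - e' + hR - sBox l1 * hX
          rw [VRU.finsum_addBox, VRU.finsum_addBox] at hS
          rw [Finset.sum_sub_distrib, hS, sub_self]
        have hcond1 : ∀ μ : YoungDiagram, μ.card + 1 = l3.card →
            ∑ g ∈ VRU.addFinset μ, t ^ (kappa g - kappa μ) * (T l1 l2 g - T' l1 l2 g) = 0 := by
          intro μ hμ
          have e := e31 l1 l2 μ
          have e' := f31 l1 l2 μ
          have hX : T l1 l2 μ = T' l1 l2 μ := ih l1 l2 μ (by omega)
          have hR : (∑ᶠ (a : YoungDiagram) (_ : AddBox a l1), T a l2 μ)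
              = ∑ᶠ (a : YoungDiagram) (_ : AddBox a l1), T' a l2 μ :=
            VRU.cond_congr fun a ha => ih a l2 μ (by have := ha.2; omega)
          have hS : (∑ᶠ (g : YoungDiagram) (_ : AddBox μ g), t ^ (kappa g - kappa μ) * T l1 l2 g)
              = ∑ᶠ (g : YoungDiagram) (_ : AddBox μ g), t ^ (kappa g - kappa μ) * T' l1 l2 g := by
            linear_combination e - e' + hR - sBox l2.transpose * hX
          rw [VRU.finsum_addBox, VRU.finsum_addBox] at hS
          simp only [mul_sub]
          rw [Finset.sum_sub_distrib, hS, sub_self]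
        have hz := VRU.keyV (fun g => T l1 l2 g - T' l1 l2 g) l3.card h3 hcond0 hcond1 l3 rfl
        have : T l1 l2 l3 - T' l1 l2 l3 = 0 := hz
        exact sub_eq_zero.mp this
      · by_cases h2 : 0 < l2.card
        · -- grow in slot 2
          have hcond0 : ∀ μ : YoungDiagram, μ.card + 1 = l2.card →
              ∑ g ∈ VRU.addFinset μ, (T l1 g l3 - T' l1 g l3) = 0 := by
            intro μ hμ
            have e := e32cc l3 l1 μ
            have e' := f32cc l3 l1 μ
            simp only at e e'
            have hX : T l1 μ l3 = T' l1 μ l3 := ih l1 μ l3 (by omega)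
            have hR : (∑ᶠ (b : YoungDiagram) (_ : AddBox b l1), t ^ (kappa b - kappa l1) * T b μ l3)
                = ∑ᶠ (b : YoungDiagram) (_ : AddBox b l1), t ^ (kappa b - kappa l1) * T' b μ l3 :=
              VRU.cond_congr fun b hb => by
                rw [ih b μ l3 (by have := hb.2; omega)]
            have hS : (∑ᶠ (g : YoungDiagram) (_ : AddBox μ g), T l1 g l3)
                = ∑ᶠ (g : YoungDiagram) (_ : AddBox μ g), T' l1 g l3 := by
              linear_combination e - e' + hR - sBox l3 * hX
            rw [VRU.finsum_addBox, VRU.finsum_addBox] at hS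
            rw [Finset.sum_sub_distrib, hS, sub_self]
          have hcond1 : ∀ μ : YoungDiagram, μ.card + 1 = l2.card →
              ∑ g ∈ VRU.addFinset μ, t ^ (kappa g - kappa μ) * (T l1 g l3 - T' l1 g l3) = 0 := by
            intro μ hμ
            have e := e31cc l3 l1 μ
            have e' := f31cc l3 l1 μ
            simp only at e e'
            have hX : T l1 μ l3 = T' l1 μ l3 := ih l1 μ l3 (by omega)
            have hR : (∑ᶠ (a : YoungDiagram) (_ : AddBox a l3), T l1 μ a)
                = ∑ᶠ (a : YoungDiagram) (_ : AddBox a l3), T' l1 μ a :=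
              VRU.cond_congr fun a ha => ih l1 μ a (by have := ha.2; omega)
            have hS : (∑ᶠ (g : YoungDiagram) (_ : AddBox μ g), t ^ (kappa g - kappa μ) * T l1 g l3)
                = ∑ᶠ (g : YoungDiagram) (_ : AddBox μ g), t ^ (kappa g - kappa μ) * T' l1 g l3 := by
              linear_combination e - e' + hR - sBox l1.transpose * hX
            rw [VRU.finsum_addBox, VRU.finsum_addBox] at hS
            simp only [mul_sub]
            rw [Finset.sum_sub_distrib, hS, sub_self]
          have hz := VRU.keyV (fun g => T l1 g l3 - T' l1 g l3) l2.card h2 hcond0 hcond1 l2 rfl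
          have : T l1 l2 l3 - T' l1 l2 l3 = 0 := hz
          exact sub_eq_zero.mp this
        · -- grow in slot 1
          have h1c : 0 < l1.card := by omega
          have hcond0 : ∀ μ : YoungDiagram, μ.card + 1 = l1.card →
              ∑ g ∈ VRU.addFinset μ, (T g l2 l3 - T' g l2 l3) = 0 := by
            intro μ hμ
            have e := e32c l2 l3 μ
            have e' := f32c l2 l3 μ
            simp only at e e'
            have hX : T μ l2 l3 = T' μ l2 l3 := ih μ l2 l3 (by omega)
            have hR : (∑ᶠ (b : YoungDiagram) (_ : AddBox b l3), t ^ (kappa b - kappa l3) * T μ l2 b)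
                = ∑ᶠ (b : YoungDiagram) (_ : AddBox b l3), t ^ (kappa b - kappa l3) * T' μ l2 b :=
              VRU.cond_congr fun b hb => by
                rw [ih μ l2 b (by have := hb.2; omega)]
            have hS : (∑ᶠ (g : YoungDiagram) (_ : AddBox μ g), T g l2 l3)
                = ∑ᶠ (g : YoungDiagram) (_ : AddBox μ g), T' g l2 l3 := by
              linear_combination e - e' + hR - sBox l2 * hX
            rw [VRU.finsum_addBox, VRU.finsum_addBox] at hS
            rw [Finset.sum_sub_distrib, hS, sub_self]
          have hcond1 : ∀ μ : YoungDiagram, μ.card + 1 = l1.card →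
              ∑ g ∈ VRU.addFinset μ, t ^ (kappa g - kappa μ) * (T g l2 l3 - T' g l2 l3) = 0 := by
            intro μ hμ
            have e := e31c l2 l3 μ
            have e' := f31c l2 l3 μ
            simp only at e e'
            have hX : T μ l2 l3 = T' μ l2 l3 := ih μ l2 l3 (by omega)
            have hR : (∑ᶠ (a : YoungDiagram) (_ : AddBox a l2), T μ a l3)
                = ∑ᶠ (a : YoungDiagram) (_ : AddBox a l2), T' μ a l3 :=
              VRU.cond_congr fun a ha => ih μ a l3 (by have := ha.2; omega)
            have hS : (∑ᶠ (g : YoungDiagram) (_ : AddBox μ g), t ^ (kappa g - kappa μ) * T g l2 l3)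
                = ∑ᶠ (g : YoungDiagram) (_ : AddBox μ g), t ^ (kappa g - kappa μ) * T' g l2 l3 := by
              linear_combination e - e' + hR - sBox l3.transpose * hX
            rw [VRU.finsum_addBox, VRU.finsum_addBox] at hS
            simp only [mul_sub]
            rw [Finset.sum_sub_distrib, hS, sub_self]
          have hz := VRU.keyV (fun g => T g l2 l3 - T' g l2 l3) l1.card h1c hcond0 hcond1 l1 rfl
          have : T l1 l2 l3 - T' l1 l2 l3 = 0 := hz
          exact sub_eq_zero.mp this
  funext l1 l2 l3
  exact main (l1.card + l2.card + l3.card) l1 l2 l3 le_rfl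

end
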